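/- Let n ≥ 2 and 1 ≤ k ≤ n−1. For j ∈ [n] = {1,…,n}, define the linear functional L_j on ℝ^n by L_j(y) = Σ_{t=1}^{n−1} t · y_{j+t}, where indices are taken modulo n in {1,…,n}. For a k-element subset J of [n], let e_J ∈ ℝ^n be its indicator vector, and define h_J ∈ ℝ^{C(n,k)} (with coordinates indexed by the k-element subsets of [n]) by (h_J)_I = (1/n) · min{ L_1(e_I − e_J), …, L_n(e_I − e_J) } for each k-element subset I. Then the family (h_J), indexed by all k-element subsets J of [n], is linearly independent, and hence (having C(n,k) members) is a basis of ℝ^{C(n,k)}. -/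

import Mathlib

open Finset
open scoped Fin.NatCast Fin.IntCast Fin.CommRing

namespace Stmt9

variable {n : ℕ} [NeZero n]

/-- Sum of cyclic distances `(x - j) mod n` over `x ∈ K`. -/
def ell (j : Fin n) (K : Finset (Fin n)) : ℕ := ∑ x ∈ K, ((x - j : Fin n) : ℕ)

noncomputable def cf (I J : Finset (Fin n)) (j : Fin n) : ℝ := (ell j I : ℝ) - (ell j J : ℝ)

lemma sum_ind (j : Fin n) (K : Finset (Fin n)) :
    ∑ t : Fin n, (t.val : ℝ) * (if (j + t) ∈ K then (1:ℝ) else 0) = (ell j K : ℝ) := by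
  have h1 : ∀ t : Fin n,
      (t.val : ℝ) * (if (j + t) ∈ K then (1:ℝ) else 0)
        = (fun s : Fin n => (((s - j : Fin n) : ℕ) : ℝ) * (if s ∈ K then (1:ℝ) else 0))
            (Equiv.addLeft j t) := by
    intro t
    simp [Equiv.addLeft, add_sub_cancel_left]
  rw [Finset.sum_congr rfl (fun t _ => h1 t)]
  rw [Equiv.sum_comp (Equiv.addLeft j)
    (fun s : Fin n => (((s - j : Fin n) : ℕ) : ℝ) * (if s ∈ K then (1:ℝ) else 0))]
  simp only [mul_ite, mul_one, mul_zero]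
  rw [Finset.sum_ite_mem, Finset.univ_inter, ell]
  push_cast
  rfl

lemma L_eq (j : Fin n) (I J : Finset (Fin n)) :
    ∑ t : Fin n, (t.val : ℝ) * ((if (j + t) ∈ I then (1:ℝ) else 0) - (if (j + t) ∈ J then (1:ℝ) else 0))
      = cf I J j := by
  simp only [mul_sub, Finset.sum_sub_distrib, sum_ind, cf]

lemma sub_one_val (u : Fin n) :
    ((u - 1 : Fin n) : ℕ) = if u = 0 then n - 1 else u.val - 1 := by
  rcases Nat.exists_eq_succ_of_ne_zero (NeZero.ne n) with ⟨m, rfl⟩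
  rw [Fin.coe_sub_one]
  simp

lemma val_sub_succ (x j : Fin n) :
    (((x - (j + 1) : Fin n) : ℕ) : ℤ)
      = (((x - j : Fin n) : ℕ) : ℤ) - 1 + n * (if x = j then 1 else 0) := by
  have h : (x - (j + 1) : Fin n) = (x - j) - 1 := by ring
  rw [h, sub_one_val]
  rcases eq_or_ne x j with rfl | hxj
  · simp only [sub_self, if_pos rfl, Fin.val_zero]
    have hn : 1 ≤ n := Nat.one_le_iff_ne_zero.mpr (NeZero.ne n)
    push_cast [hn]
    ring
  · have h0 : (x - j : Fin n) ≠ 0 := sub_ne_zero.mpr hxj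
    rw [if_neg h0, if_neg hxj]
    have h1 : 1 ≤ ((x - j : Fin n) : ℕ) := Nat.one_le_iff_ne_zero.mpr (by
      exact Fin.val_ne_zero_iff.mpr h0)
    push_cast [h1]
    ring

lemma ell_succ (j : Fin n) (K : Finset (Fin n)) :
    (ell (j + 1) K : ℤ) = (ell j K : ℤ) - K.card + n * (if j ∈ K then 1 else 0) := by
  have : (ell (j+1) K : ℤ) = ∑ x ∈ K, (((x - (j+1) : Fin n) : ℕ) : ℤ) := by
    rw [ell]; push_cast; rfl
  rw [this]
  rw [Finset.sum_congr rfl (fun x _ => val_sub_succ x j)]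
  rw [Finset.sum_add_distrib, Finset.sum_sub_distrib]
  have h2 : ∑ x ∈ K, ((n : ℤ) * (if x = j then 1 else 0)) = n * (if j ∈ K then 1 else 0) := by
    rw [← Finset.mul_sum]
    congr 1
    simp [Finset.sum_ite_eq' K j (fun _ => (1:ℤ))]
  rw [h2, ell, Finset.card_eq_sum_ones K]
  push_cast
  simp [smul_eq_mul]

lemma cf_succ {I J : Finset (Fin n)} (hc : I.card = J.card) (j : Fin n) :
    cf I J (j + 1) = cf I J j
      + n * ((if j ∈ I then (1:ℝ) else 0) - (if j ∈ J then (1:ℝ) else 0)) := by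
  have hI := ell_succ j I
  have hJ := ell_succ j J
  have : ((ell (j+1) I : ℤ) : ℝ) - ((ell (j+1) J : ℤ) : ℝ)
      = ((ell j I : ℤ) : ℝ) - ((ell j J : ℤ) : ℝ)
        + n * ((if j ∈ I then (1:ℝ) else 0) - (if j ∈ J then (1:ℝ) else 0)) := by
    rw [hI, hJ, hc]
    push_cast
    split_ifs <;> ring
  simpa [cf] using this

/-- Walk formula for `cf` along the cycle. -/
lemma cf_walk {I J : Finset (Fin n)} (hc : I.card = J.card) (j : Fin n) (m : ℕ) :
    cf I J (j + (m : Fin n)) = cf I J j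
      + n * ∑ t ∈ Finset.range m,
          ((if j + (t : Fin n) ∈ I then (1:ℝ) else 0) - (if j + (t : Fin n) ∈ J then (1:ℝ) else 0)) := by
  induction m with
  | zero => simp
  | succ m ih =>
      have hcast : ((m + 1 : ℕ) : Fin n) = (m : Fin n) + 1 := by push_cast; ring
      rw [hcast, ← add_assoc, cf_succ hc, ih, Finset.sum_range_succ]
      ring

/-- Integrality: differences of `cf` values are integer multiples of `n`. -/
lemma cf_int {I J : Finset (Fin n)} (hc : I.card = J.card) (j : Fin n) (m : ℕ) :
    ∃ z : ℤ, cf I J (j + (m : Fin n)) - cf I J j = n * (z : ℝ) := by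
  refine ⟨∑ t ∈ Finset.range m,
      ((if j + (t : Fin n) ∈ I then (1:ℤ) else 0) - (if j + (t : Fin n) ∈ J then (1:ℤ) else 0)), ?_⟩
  rw [cf_walk hc j m]
  push_cast
  ring_nf

/-- The infimum of a function on `Fin n` is attained. -/
lemma exists_min (f : Fin n → ℝ) : ∃ j₀ : Fin n, (∀ j, f j₀ ≤ f j) ∧ (⨅ j, f j) = f j₀ := by
  haveI : Nonempty (Fin n) := ⟨0⟩
  obtain ⟨j₀, hj₀⟩ := Finite.exists_min f
  refine ⟨j₀, hj₀, le_antisymm (ciInf_le (Set.finite_range f).bddBelow j₀) (le_ciInf hj₀)⟩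

lemma iInf_le' (f : Fin n → ℝ) (j : Fin n) : (⨅ i, f i) ≤ f j := by
  haveI : Nonempty (Fin n) := ⟨0⟩
  exact ciInf_le (Set.finite_range f).bddBelow j

lemma iInf_eq_of_min (f : Fin n → ℝ) (j₀ : Fin n) (h : ∀ j, f j₀ ≤ f j) : (⨅ i, f i) = f j₀ := by
  haveI : Nonempty (Fin n) := ⟨0⟩
  exact le_antisymm (ciInf_le (Set.finite_range f).bddBelow j₀) (le_ciInf h)

/-- Chain lemma: if `J` is neither empty nor everything and `b ∈ J`, there is `N` with
`b - (N+1) ∉ J` and `b - i ∈ J` for all `i ≤ N`. -/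
lemma chain {J : Finset (Fin n)} {x b : Fin n} (hx : x ∉ J) (hb : b ∈ J) :
    ∃ N : ℕ, (b - ((N + 1 : ℕ) : Fin n) ∉ J) ∧ ∀ i ≤ N, b - ((i : ℕ) : Fin n) ∈ J := by
  have hbx : b ≠ x := fun h => hx (h ▸ hb)
  have hP : ∃ t : ℕ, b - ((t + 1 : ℕ) : Fin n) ∉ J := by
    refine ⟨((b - x : Fin n) : ℕ) - 1, ?_⟩
    have h0 : (b - x : Fin n) ≠ 0 := sub_ne_zero.mpr hbx
    have h1 : 1 ≤ ((b - x : Fin n) : ℕ) := Nat.one_le_iff_ne_zero.mpr (by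
      exact Fin.val_ne_zero_iff.mpr h0)
    have : (((b - x : Fin n) : ℕ) - 1 + 1 : ℕ) = ((b - x : Fin n) : ℕ) := by omega
    rw [this, Fin.cast_val_eq_self]
    simpa using hx
  classical
  refine ⟨Nat.find hP, Nat.find_spec hP, ?_⟩
  intro i hi
  rcases Nat.eq_zero_or_pos i with rfl | hpos
  · simpa using hb
  · obtain ⟨t, rfl⟩ := Nat.exists_eq_succ_of_ne_zero (Nat.pos_iff_ne_zero.mp hpos)
    have := Nat.find_min hP (m := t) (by omega)
    simpa using not_not.mp this

/-- Key lemma: if `I ≠ J`, some left endpoint of a run of `J` is not a minimizer,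
quantitatively: its `cf` value is at least the minimum plus `n`. -/
lemma lemmaC {I J : Finset (Fin n)} (hc : I.card = J.card) (hne : I ≠ J)
    (hJuniv : J ≠ Finset.univ) :
    ∃ a ∈ J, a - 1 ∉ J ∧ (⨅ j, cf I J j) + n ≤ cf I J a := by
  classical
  by_contra hcon
  push_neg at hcon
  obtain ⟨j₀, hj₀min, hj₀eq⟩ := exists_min (cf I J)
  rw [hj₀eq] at hcon
  have hn0 : (0:ℝ) < n := by
    have := NeZero.ne n
    positivity
  -- Step A : boundary points are minimizers
  have stepA : ∀ a ∈ J, a - 1 ∉ J → cf I J a = cf I J j₀ := by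
    intro a ha ha'
    obtain ⟨z, hz⟩ := cf_int hc j₀ ((a - j₀ : Fin n) : ℕ)
    rw [Fin.cast_val_eq_self, add_sub_cancel] at hz
    have h1 : (0:ℝ) ≤ n * z := by
      rw [← hz]; linarith [hj₀min a]
    have h2 : (n:ℝ) * z < n := by
      have := hcon a ha ha'
      rw [← hz] at * ; linarith
    have hz0 : z = 0 := by
      have hzz : (0:ℝ) ≤ (z:ℝ) ∧ (z:ℝ) < 1 := by
        constructor
        · nlinarith
        · nlinarith
      have : (0:ℤ) ≤ z ∧ z < 1 := by
        constructor
        · exact_mod_cast hzz.1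
        · exact_mod_cast hzz.2
      omega
    rw [hz0] at hz
    simp at hz
    linarith
  -- Step B : propagation along runs
  have stepB : ∀ j : Fin n, cf I J j = cf I J j₀ → j ∈ J →
      j ∈ I ∧ cf I J (j + 1) = cf I J j₀ := by
    intro j hj hjJ
    have hsucc := cf_succ hc j
    rw [if_pos hjJ, hj] at hsucc
    have hge : cf I J j₀ ≤ cf I J (j + 1) := hj₀min _
    by_cases hjI : j ∈ I
    · rw [if_pos hjI] at hsucc
      simp at hsucc
      exact ⟨hjI, hsucc⟩
    · rw [if_neg hjI] at hsucc
      exfalso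
      rw [hsucc] at hge
      nlinarith
  -- Step C : J ⊆ I
  have hJI : J ⊆ I := by
    intro b hb
    obtain ⟨x, hx⟩ : ∃ x, x ∉ J := by
      by_contra hall
      push_neg at hall
      exact hJuniv (Finset.eq_univ_iff_forall.mpr hall)
    obtain ⟨N, hN1, hN2⟩ := chain hx hb
    set a : Fin n := b - ((N : ℕ) : Fin n) with ha_def
    have hmem : ∀ s : ℕ, s ≤ N → a + ((s : ℕ) : Fin n) ∈ J := by
      intro s hs
      have hcast : ((N - s : ℕ) : Fin n) = ((N : ℕ) : Fin n) - ((s : ℕ) : Fin n) :=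
        Nat.cast_sub hs
      have : a + ((s : ℕ) : Fin n) = b - ((N - s : ℕ) : Fin n) := by
        rw [hcast, ha_def]; ring
      rw [this]
      exact hN2 _ (Nat.sub_le _ _)
    have key : ∀ s : ℕ, s ≤ N → cf I J (a + ((s : ℕ) : Fin n)) = cf I J j₀ ∧
        a + ((s : ℕ) : Fin n) ∈ I := by
      intro s
      induction s with
      | zero =>
          intro _
          have haJ : a ∈ J := by simpa using hmem 0 (Nat.zero_le _)
          have haD : a - 1 ∉ J := by
            have : a - 1 = b - ((N + 1 : ℕ) : Fin n) := by
              rw [ha_def]; push_cast; ring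
            rw [this]; exact hN1
          have h0 : cf I J a = cf I J j₀ := stepA a haJ haD
          have := stepB a h0 haJ
          simpa using ⟨h0, this.1⟩
      | succ s ih =>
          intro hs
          have hs' : s ≤ N := by omega
          have ihs := ih hs'
          have hsJ : a + ((s : ℕ) : Fin n) ∈ J := hmem s hs'
          have := stepB _ ihs.1 hsJ
          have hcast : a + ((s + 1 : ℕ) : Fin n) = (a + ((s : ℕ) : Fin n)) + 1 := by
            push_cast; ring
          rw [hcast]
          refine ⟨this.2, ?_⟩
          have hs1J : (a + ((s : ℕ) : Fin n)) + 1 ∈ J := by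
            rw [← hcast]; exact hmem (s+1) hs
          exact (stepB _ this.2 hs1J).1
    have hba : b = a + ((N : ℕ) : Fin n) := by rw [ha_def]; ring
    rw [hba]
    exact (key N le_rfl).2
  have : J = I := Finset.eq_of_subset_of_card_le hJI (le_of_eq hc)
  exact hne this.symm

section Down

/-- Shift the elements of `S` down by one inside `J`. -/
def dn (S J : Finset (Fin n)) : Finset (Fin n) := (J \ S) ∪ S.image (· - 1)

lemma sub_one_inj : Function.Injective (fun x : Fin n => x - 1) :=
  sub_left_injective

lemma dn_disj {S J : Finset (Fin n)} (hD : ∀ a ∈ S, a - 1 ∉ J) :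
    Disjoint (J \ S) (S.image (· - 1)) := by
  rw [Finset.disjoint_right]
  intro y hy
  obtain ⟨a, ha, rfl⟩ := Finset.mem_image.mp hy
  intro hmem
  exact hD a ha (Finset.mem_sdiff.mp hmem).1

lemma dn_card {S J : Finset (Fin n)} (hS : S ⊆ J) (hD : ∀ a ∈ S, a - 1 ∉ J) :
    (dn S J).card = J.card := by
  rw [dn, Finset.card_union_of_disjoint (dn_disj hD),
    Finset.card_image_of_injective _ sub_one_inj, Finset.card_sdiff_of_subset hS]
  have := Finset.card_le_card hS
  omega

lemma ell_dn {S J : Finset (Fin n)} (hS : S ⊆ J) (hD : ∀ a ∈ S, a - 1 ∉ J) (j : Fin n) :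
    (ell j (dn S J) : ℤ) = (ell j J : ℤ) - S.card + n * (if j ∈ S then 1 else 0) := by
  have hsum : (ell j (dn S J) : ℤ) = ∑ x ∈ J \ S, (((x - j : Fin n) : ℕ) : ℤ)
      + ∑ a ∈ S, (((a - 1 - j : Fin n) : ℕ) : ℤ) := by
    rw [ell]
    push_cast
    rw [dn, Finset.sum_union (dn_disj hD), Finset.sum_image (fun a _ b _ h => sub_one_inj h)]
  have hstep : ∀ a : Fin n, (((a - 1 - j : Fin n) : ℕ) : ℤ)
      = (((a - j : Fin n) : ℕ) : ℤ) - 1 + n * (if a = j then 1 else 0) := by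
    intro a
    have : (a - 1 - j : Fin n) = a - (j + 1) := by ring
    rw [this, val_sub_succ]
  rw [hsum, Finset.sum_congr rfl (fun a _ => hstep a), Finset.sum_add_distrib,
    Finset.sum_sub_distrib]
  have h2 : ∑ a ∈ S, ((n : ℤ) * (if a = j then 1 else 0)) = n * (if j ∈ S then 1 else 0) := by
    rw [← Finset.mul_sum]
    congr 1
    simp [Finset.sum_ite_eq' S j (fun _ => (1:ℤ))]
  rw [h2]
  have h3 : ∑ x ∈ J \ S, (((x - j : Fin n) : ℕ) : ℤ) + ∑ a ∈ S, (((a - j : Fin n) : ℕ) : ℤ)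
      = (ell j J : ℤ) := by
    rw [ell, ← Finset.sum_sdiff hS]
    push_cast
    ring
  rw [Finset.card_eq_sum_ones S]
  push_cast
  linarith [h3]

lemma cf_dn {I S J : Finset (Fin n)} (hS : S ⊆ J) (hD : ∀ a ∈ S, a - 1 ∉ J) (j : Fin n) :
    cf I (dn S J) j = cf I J j - n * (if j ∈ S then 1 else 0) + S.card := by
  have h := ell_dn hS hD (j := j)
  have : ((ell j (dn S J) : ℤ) : ℝ) = ((ell j J : ℤ) : ℝ) - S.card
      + n * (if j ∈ S then 1 else 0) := by
    rw [h]; push_cast; split_ifs <;> ring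
  rw [cf, cf]
  push_cast at this ⊢
  rw [this]
  ring

end Down

lemma iInf_add_const (f : Fin n → ℝ) (c : ℝ) : ⨅ j, (f j + c) = (⨅ j, f j) + c := by
  obtain ⟨j₀, hmin, heq⟩ := exists_min f
  rw [heq, iInf_eq_of_min (fun j => f j + c) j₀
    (fun j => by simpa using add_le_add_right (hmin j) c)]

/-- Left endpoints of the cyclic runs of `J`. -/
def Dset (J : Finset (Fin n)) : Finset (Fin n) := J.filter (fun a => a - 1 ∉ J)

lemma Dset_nonempty {J : Finset (Fin n)} (hne : J.Nonempty) (huniv : J ≠ Finset.univ) :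
    (Dset J).Nonempty := by
  obtain ⟨b, hb⟩ := hne
  obtain ⟨x, hx⟩ : ∃ x, x ∉ J := by
    by_contra hall
    push_neg at hall
    exact huniv (Finset.eq_univ_iff_forall.mpr hall)
  obtain ⟨N, hN1, hN2⟩ := chain hx hb
  refine ⟨b - ((N : ℕ) : Fin n), Finset.mem_filter.mpr ⟨hN2 N le_rfl, ?_⟩⟩
  have : b - ((N : ℕ) : Fin n) - 1 = b - ((N + 1 : ℕ) : Fin n) := by
    push_cast; ring
  rw [this]
  exact hN1

lemma pow_alt (T : Finset (Fin n)) :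
    ∑ S ∈ T.powerset, (-1:ℝ)^S.card = if T = ∅ then 1 else 0 := by
  have h := Finset.sum_powerset_neg_one_pow_card (x := T)
  have hcast : ∑ S ∈ T.powerset, (-1:ℝ)^S.card
      = ((∑ S ∈ T.powerset, (-1:ℤ)^S.card : ℤ) : ℝ) := by
    push_cast
    rfl
  rw [hcast, h]
  split_ifs <;> simp

lemma pow_alt_card (T : Finset (Fin n)) :
    ∑ S ∈ T.powerset, (-1:ℝ)^S.card * S.card = if T.card = 1 then -1 else 0 := by
  classical
  induction T using Finset.induction_on with
  | empty => simp
  | @insert a T ha ih =>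
      rw [Finset.sum_powerset_insert ha]
      have hstep : ∀ S ∈ T.powerset,
          (-1:ℝ)^(insert a S).card * (insert a S).card
            = -((-1:ℝ)^S.card * S.card) - (-1:ℝ)^S.card := by
        intro S hS
        have haS : a ∉ S := fun h => ha (Finset.mem_powerset.mp hS h)
        rw [Finset.card_insert_of_notMem haS]
        push_cast
        ring
      rw [Finset.sum_congr rfl hstep]
      have : ∑ S ∈ T.powerset, (-((-1:ℝ)^S.card * S.card) - (-1:ℝ)^S.card)
          = -(∑ S ∈ T.powerset, (-1:ℝ)^S.card * S.card) - ∑ S ∈ T.powerset, (-1:ℝ)^S.card := by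
        rw [Finset.sum_sub_distrib, Finset.sum_neg_distrib]
      rw [this, pow_alt]
      rw [Finset.card_insert_of_notMem ha]
      rcases Finset.eq_empty_or_nonempty T with rfl | hTne
      · simp
      · have h1 : T ≠ ∅ := Finset.nonempty_iff_ne_empty.mp hTne
        have h2 : T.card ≠ 0 := by
          simpa [Finset.card_eq_zero] using h1
        rw [if_neg h1, if_neg (by omega : ¬ T.card + 1 = 1)]
        rw [ih]
        rcases eq_or_ne T.card 1 with h3 | h3 <;> simp [h3]

/-- Identity A : the alternating sum of the minima over shift-downs. -/
lemma identA {I J : Finset (Fin n)} (hc : I.card = J.card) (hJne : J.Nonempty)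
    (hJuniv : J ≠ Finset.univ) :
    ∑ S ∈ (Dset J).powerset, (-1:ℝ)^S.card * (⨅ j, cf I (dn S J) j)
      = n * (if J = I then 1 else 0) - (if (Dset J).card = 1 then 1 else 0) := by
  classical
  set φ : Finset (Fin n) → ℝ :=
    fun S => ⨅ j, (cf I J j - n * (if j ∈ S then (1:ℝ) else 0)) with hφ
  have hsub : ∀ S ∈ (Dset J).powerset, S ⊆ J ∧ ∀ a ∈ S, a - 1 ∉ J := by
    intro S hS
    have h1 : S ⊆ Dset J := Finset.mem_powerset.mp hS
    constructor
    · exact h1.trans (Finset.filter_subset _ _)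
    · intro a ha
      exact (Finset.mem_filter.mp (h1 ha)).2
  have step1 : ∀ S ∈ (Dset J).powerset, (⨅ j, cf I (dn S J) j) = φ S + S.card := by
    intro S hS
    obtain ⟨h1, h2⟩ := hsub S hS
    have : ∀ j, cf I (dn S J) j
        = (cf I J j - n * (if j ∈ S then (1:ℝ) else 0)) + S.card := by
      intro j
      rw [cf_dn h1 h2]
    rw [iInf_congr this, iInf_add_const]
  rw [Finset.sum_congr rfl (fun S hS => by rw [step1 S hS])]
  have hsplit : ∑ S ∈ (Dset J).powerset, (-1:ℝ)^S.card * (φ S + S.card)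
      = ∑ S ∈ (Dset J).powerset, (-1:ℝ)^S.card * φ S
        + ∑ S ∈ (Dset J).powerset, (-1:ℝ)^S.card * S.card := by
    rw [← Finset.sum_add_distrib]
    exact Finset.sum_congr rfl (fun S _ => by ring)
  rw [hsplit, pow_alt_card]
  have main : ∑ S ∈ (Dset J).powerset, (-1:ℝ)^S.card * φ S
      = n * (if J = I then 1 else 0) := by
    rcases eq_or_ne J I with rfl | hne
    · -- diagonal case : cf ≡ 0
      have hcf : ∀ j, cf J J j = 0 := fun j => sub_self _
      have hφval : ∀ S ∈ (Dset J).powerset, φ S = if S = ∅ then 0 else (-n : ℝ) := by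
        intro S _
        rcases Finset.eq_empty_or_nonempty S with rfl | hSne
        · rw [if_pos rfl, hφ]
          simp [hcf, ciInf_const]
        · rw [if_neg (Finset.nonempty_iff_ne_empty.mp hSne)]
          obtain ⟨a, haS⟩ := hSne
          rw [hφ]
          refine iInf_eq_of_min _ a ?_ |>.trans ?_
          · intro j
            simp only [hcf, zero_sub, if_pos haS]
            have : (0:ℝ) ≤ n := by positivity
            split_ifs <;> simp <;> nlinarith
          · simp [hcf, if_pos haS]
      have hφsum : ∑ S ∈ (Dset J).powerset, (-1:ℝ)^S.card * φ S
          = ∑ S ∈ (Dset J).powerset, (-1:ℝ)^S.card * (if S = ∅ then 0 else (-n : ℝ)) :=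
        Finset.sum_congr rfl (fun S hS => by rw [hφval S hS])
      rw [hφsum]
      have hrw : ∀ S ∈ (Dset J).powerset,
          (-1:ℝ)^S.card * (if S = ∅ then 0 else (-n : ℝ))
            = (-n : ℝ) * (-1:ℝ)^S.card + (if S = ∅ then (n : ℝ) else 0) := by
        intro S _
        rcases eq_or_ne S ∅ with rfl | hSne
        · simp
        · rw [if_neg hSne, if_neg hSne]
          ring
      rw [Finset.sum_congr rfl hrw, Finset.sum_add_distrib, ← Finset.mul_sum, pow_alt]
      have hDne : Dset J ≠ ∅ := Finset.nonempty_iff_ne_empty.mp (Dset_nonempty hJne hJuniv)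
      rw [if_neg hDne]
      rw [Finset.sum_ite_eq' ((Dset J).powerset) (∅ : Finset (Fin n)) (fun _ => (n:ℝ))]
      rw [if_pos (Finset.empty_mem_powerset _)]
      simp
    · -- off-diagonal case : pairing
      obtain ⟨astar, haJ, haD, hstar⟩ := lemmaC hc (fun h => hne h.symm) hJuniv
      have haDset : astar ∈ Dset J := Finset.mem_filter.mpr ⟨haJ, haD⟩
      obtain ⟨j₀, hj₀min, hj₀eq⟩ := exists_min (cf I J)
      rw [hj₀eq] at hstar
      have hpair : ∀ S ∈ ((Dset J).erase astar).powerset, φ (insert astar S) = φ S := by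
        intro S hS
        have haS : astar ∉ S :=
          fun h => (Finset.notMem_erase astar (Dset J)) (Finset.mem_powerset.mp hS h)
        set f1 : Fin n → ℝ :=
          fun j => cf I J j - n * (if j ∈ insert astar S then (1:ℝ) else 0) with hf1
        set f2 : Fin n → ℝ := fun j => cf I J j - n * (if j ∈ S then (1:ℝ) else 0) with hf2
        have hn0 : (0:ℝ) ≤ n := by positivity
        have hle : ∀ j, f1 j ≤ f2 j := by
          intro j
          rw [hf1, hf2]
          simp only
          by_cases hj : j ∈ S
          · rw [if_pos hj, if_pos (Finset.mem_insert_of_mem hj)]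
          · rw [if_neg hj]
            split_ifs <;> simp <;> nlinarith
        have dir1 : (⨅ j, f1 j) ≤ ⨅ j, f2 j := by
          obtain ⟨j₂, hj₂min, hj₂eq⟩ := exists_min f2
          rw [hj₂eq]
          exact le_trans (iInf_le' f1 j₂) (hle j₂)
        have dir2 : (⨅ j, f2 j) ≤ ⨅ j, f1 j := by
          obtain ⟨j₁, hj₁min, hj₁eq⟩ := exists_min f1
          rw [hj₁eq]
          rcases eq_or_ne j₁ astar with rfl | hja
          · have hval : f1 j₁ = cf I J j₁ - n := by
              rw [hf1]
              simp [Finset.mem_insert_self]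
            have hmle : (⨅ j, f2 j) ≤ cf I J j₀ := by
              by_cases hall : ∀ j, cf I J j = cf I J j₀ → j ∈ S
              · have hj₀S : j₀ ∈ S := hall j₀ rfl
                calc (⨅ j, f2 j) ≤ f2 j₀ := iInf_le' f2 j₀
                  _ = cf I J j₀ - n := by rw [hf2]; simp [hj₀S]
                  _ ≤ cf I J j₀ := by linarith
              · push_neg at hall
                obtain ⟨j₃, hj₃, hj₃S⟩ := hall
                calc (⨅ j, f2 j) ≤ f2 j₃ := iInf_le' f2 j₃
                  _ = cf I J j₀ := by rw [hf2]; simp [hj₃S, hj₃]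
            rw [hval]
            linarith
          · calc (⨅ j, f2 j) ≤ f2 j₁ := iInf_le' f2 j₁
              _ = f1 j₁ := by
                  simp [hf1, hf2, Finset.mem_insert, hja]
        rw [hφ]
        exact le_antisymm dir1 dir2
      have hT : Dset J = insert astar ((Dset J).erase astar) :=
        (Finset.insert_erase haDset).symm
      rw [if_neg hne, hT, Finset.sum_powerset_insert (Finset.notMem_erase _ _)]
      have hcancel : ∀ S ∈ ((Dset J).erase astar).powerset,
          (-1:ℝ)^(insert astar S).card * φ (insert astar S)
            = -((-1:ℝ)^S.card * φ S) := by
        intro S hS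
        have haS : astar ∉ S :=
          fun h => (Finset.notMem_erase astar (Dset J)) (Finset.mem_powerset.mp hS h)
        rw [Finset.card_insert_of_notMem haS, hpair S hS]
        ring
      rw [Finset.sum_congr rfl hcancel, Finset.sum_neg_distrib]
      ring
  rw [main]
  split_ifs <;> ring

/-- The cyclic interval `{a, a+1, ..., a+k-1}`. -/
def Iv (a : Fin n) (k : ℕ) : Finset (Fin n) :=
  (Finset.range k).image (fun s => a + ((s : ℕ) : Fin n))

lemma mem_Iv {a x : Fin n} {k : ℕ} (hk : k ≤ n) :
    x ∈ Iv a k ↔ ((x - a : Fin n) : ℕ) < k := by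
  constructor
  · intro hx
    obtain ⟨s, hs, rfl⟩ := Finset.mem_image.mp hx
    rw [Finset.mem_range] at hs
    rw [add_sub_cancel_left, Fin.val_cast_of_lt (lt_of_lt_of_le hs hk)]
    exact hs
  · intro hx
    refine Finset.mem_image.mpr ⟨((x - a : Fin n) : ℕ), Finset.mem_range.mpr hx, ?_⟩
    rw [Fin.cast_val_eq_self, add_sub_cancel]

lemma card_Iv (a : Fin n) {k : ℕ} (hk : k ≤ n) : (Iv a k).card = k := by
  rw [Iv, Finset.card_image_of_injOn, Finset.card_range]
  intro s hs t ht hst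
  rw [Finset.mem_coe, Finset.mem_range] at hs ht
  have h1 : ((s : ℕ) : Fin n) = ((t : ℕ) : Fin n) := by
    have := congrArg (fun z => z - a) hst
    simpa using this
  have h2 := congrArg Fin.val h1
  rwa [Fin.val_cast_of_lt (lt_of_lt_of_le hs hk), Fin.val_cast_of_lt (lt_of_lt_of_le ht hk)] at h2

/-- For an interval, the minimum of `cf` is attained just after the interval. -/
lemma Iv_min {I : Finset (Fin n)} {k : ℕ} (hI : I.card = k) (hk : k ≤ n) (a : Fin n) :
    (⨅ j, cf I (Iv a k) j) = cf I (Iv a k) (a + ((k : ℕ) : Fin n)) := by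
  have hcards : I.card = (Iv a k).card := by rw [hI, card_Iv a hk]
  have hn0 : (0:ℝ) ≤ n := by positivity
  refine iInf_eq_of_min _ _ (fun j => ?_)
  set u : ℕ := ((j - a : Fin n) : ℕ) with hu_def
  have hju : j = a + ((u : ℕ) : Fin n) := by
    rw [hu_def, Fin.cast_val_eq_self, add_sub_cancel]
  by_cases hu : u < k
  · -- walk from j to a + k through the interval
    have hw := cf_walk hcards j (k - u)
    have hsum : ∑ t ∈ Finset.range (k - u),
        ((if j + ((t : ℕ) : Fin n) ∈ I then (1:ℝ) else 0)
          - (if j + ((t : ℕ) : Fin n) ∈ Iv a k then (1:ℝ) else 0)) ≤ 0 := by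
      apply Finset.sum_nonpos
      intro t ht
      rw [Finset.mem_range] at ht
      have hmem : j + ((t : ℕ) : Fin n) ∈ Iv a k := by
        rw [mem_Iv hk]
        have h1 : j + ((t : ℕ) : Fin n) - a = ((u + t : ℕ) : Fin n) := by
          rw [hju]; push_cast; ring
        rw [h1, Fin.val_cast_of_lt (by omega : u + t < n)]
        omega
      rw [if_pos hmem]
      split_ifs <;> norm_num
    have hend : j + ((k - u : ℕ) : Fin n) = a + ((k : ℕ) : Fin n) := by
      rw [hju]
      have : ((u : ℕ) : Fin n) + ((k - u : ℕ) : Fin n) = ((k : ℕ) : Fin n) := by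
        rw [← Nat.cast_add]
        congr 1
        omega
      rw [add_assoc, this]
    rw [hend] at hw
    rw [hw]
    nlinarith
  · -- walk from a + k to j through the gap
    push_neg at hu
    have hw := cf_walk hcards (a + ((k : ℕ) : Fin n)) (u - k)
    have hsum : 0 ≤ ∑ t ∈ Finset.range (u - k),
        ((if a + ((k : ℕ) : Fin n) + ((t : ℕ) : Fin n) ∈ I then (1:ℝ) else 0)
          - (if a + ((k : ℕ) : Fin n) + ((t : ℕ) : Fin n) ∈ Iv a k then (1:ℝ) else 0)) := by
      apply Finset.sum_nonneg
      intro t ht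
      rw [Finset.mem_range] at ht
      have hun : u < n := by
        rw [hu_def]
        exact (j - a : Fin n).isLt
      have hmem : a + ((k : ℕ) : Fin n) + ((t : ℕ) : Fin n) ∉ Iv a k := by
        rw [mem_Iv hk]
        have h1 : a + ((k : ℕ) : Fin n) + ((t : ℕ) : Fin n) - a = ((k + t : ℕ) : Fin n) := by
          push_cast; ring
        rw [h1, Fin.val_cast_of_lt (by omega : k + t < n)]
        omega
      rw [if_neg hmem]
      split_ifs <;> norm_num
    have hend : a + ((k : ℕ) : Fin n) + ((u - k : ℕ) : Fin n) = j := by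
      rw [hju]
      rw [add_assoc, ← Nat.cast_add]
      congr 2
      omega
    rw [hend] at hw
    rw [hw]
    nlinarith

lemma ell_Iv (a : Fin n) {k : ℕ} (hk1 : 1 ≤ k) (hkn : k < n) :
    ell (a + ((k : ℕ) : Fin n)) (Iv a k) = ∑ s ∈ Finset.range k, (n - k + s) := by
  rw [ell, Iv, Finset.sum_image]
  · apply Finset.sum_congr rfl
    intro s hs
    rw [Finset.mem_range] at hs
    have h1 : a + ((s : ℕ) : Fin n) - (a + ((k : ℕ) : Fin n))
        = ((s + (n - k) : ℕ) : Fin n) := by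
      have hnk : ((n - k : ℕ) : Fin n) = -((k : ℕ) : Fin n) := by
        have : ((n - k : ℕ) : Fin n) + ((k : ℕ) : Fin n) = ((n : ℕ) : Fin n) := by
          rw [← Nat.cast_add]
          congr 1
          omega
        have hn : ((n : ℕ) : Fin n) = 0 := by
          simp [Fin.ext_iff, Nat.mod_self]
        rw [hn] at this
        linear_combination (norm := ring_nf) this
      push_cast
      rw [hnk]
      ring
    rw [h1, Fin.val_cast_of_lt (by omega : s + (n - k) < n)]
    omega
  · intro s hs t ht hst
    rw [Finset.mem_coe, Finset.mem_range] at hs ht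
    have h1 := congrArg (fun z => ((z - a : Fin n) : ℕ)) hst
    simpa [Fin.val_cast_of_lt (lt_trans hs hkn), Fin.val_cast_of_lt (lt_trans ht hkn)] using h1

lemma sum_ell_shift (I : Finset (Fin n)) (v : Fin n) :
    ∑ a : Fin n, (ell (a + v) I : ℝ) = (I.card : ℝ) * ∑ u : Fin n, (u.val : ℝ) := by
  have e1 : ∑ a : Fin n, (ell (a + v) I : ℝ) = ∑ j : Fin n, (ell j I : ℝ) :=
    Fintype.sum_equiv (Equiv.addRight v) _ _ (fun a => rfl)
  rw [e1]
  have h2 : ∀ j : Fin n, (ell j I : ℝ) = ∑ x ∈ I, (((x - j : Fin n) : ℕ) : ℝ) := by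
    intro j; rw [ell]; push_cast; rfl
  rw [Finset.sum_congr rfl (fun j _ => h2 j), Finset.sum_comm]
  have h3 : ∀ x : Fin n, ∑ j : Fin n, (((x - j : Fin n) : ℕ) : ℝ) = ∑ u : Fin n, (u.val : ℝ) := by
    intro x
    exact Fintype.sum_equiv (Equiv.subLeft x) _ _ (fun j => rfl)
  rw [Finset.sum_congr rfl (fun x _ => h3 x), Finset.sum_const, Finset.card_eq_sum_ones I]
  rw [nsmul_eq_mul]

/-- Identity B : the sum over all cyclic intervals of the minima is a negative constant. -/
lemma identB {I : Finset (Fin n)} {k : ℕ} (hI : I.card = k) (hk1 : 1 ≤ k) (hkn : k < n) :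
    ∑ a : Fin n, (⨅ j, cf I (Iv a k) j)
      = (k : ℝ) * (∑ u : Fin n, (u.val : ℝ))
        - (n : ℝ) * (∑ s ∈ Finset.range k, ((n - k + s : ℕ) : ℝ)) := by
  rw [Finset.sum_congr rfl (fun a _ => Iv_min hI (le_of_lt hkn) a)]
  have h1 : ∀ a : Fin n, cf I (Iv a k) (a + ((k : ℕ) : Fin n))
      = (ell (a + ((k : ℕ) : Fin n)) I : ℝ) - ((∑ s ∈ Finset.range k, (n - k + s) : ℕ) : ℝ) := by
    intro a
    rw [cf, ell_Iv a hk1 hkn]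
  rw [Finset.sum_congr rfl (fun a _ => h1 a), Finset.sum_sub_distrib, sum_ell_shift I, hI,
    Finset.sum_const]
  push_cast
  simp [Finset.card_univ, smul_eq_mul]

lemma constB_neg {k : ℕ} (hk1 : 1 ≤ k) (hkn : k < n) :
    (k : ℝ) * (∑ u : Fin n, (u.val : ℝ))
      - (n : ℝ) * (∑ s ∈ Finset.range k, ((n - k + s : ℕ) : ℝ)) < 0 := by
  have hn1 : 1 ≤ n := by omega
  have hA2 : (∑ u : Fin n, (u.val : ℝ)) * 2 = (n : ℝ) * ((n : ℝ) - 1) := by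
    have g1 := Finset.sum_range_id_mul_two n
    have h0 : (∑ u : Fin n, (u.val : ℝ)) = ((∑ i ∈ Finset.range n, i : ℕ) : ℝ) := by
      rw [Fin.sum_univ_eq_sum_range (fun i => (i : ℝ)) n]
      push_cast
      rfl
    have h1 := congrArg (fun z : ℕ => (z : ℝ)) g1
    push_cast [Nat.cast_sub hn1] at h1
    rw [h0]
    simpa using h1
  have hC2 : (∑ s ∈ Finset.range k, ((s : ℕ) : ℝ)) * 2 = (k : ℝ) * ((k : ℝ) - 1) := by
    have g2 := Finset.sum_range_id_mul_two k
    have h1 := congrArg (fun z : ℕ => (z : ℝ)) g2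
    push_cast [Nat.cast_sub hk1] at h1
    simpa using h1
  have hB : (∑ s ∈ Finset.range k, ((n - k + s : ℕ) : ℝ))
      = (k : ℝ) * ((n : ℝ) - (k : ℝ)) + ∑ s ∈ Finset.range k, ((s : ℕ) : ℝ) := by
    have : ∀ s ∈ Finset.range k, ((n - k + s : ℕ) : ℝ) = ((n : ℝ) - (k : ℝ)) + s := by
      intro s _
      push_cast [Nat.cast_sub (le_of_lt hkn)]
      ring
    rw [Finset.sum_congr rfl this, Finset.sum_add_distrib, Finset.sum_const,
      Finset.card_range, nsmul_eq_mul]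
  rw [hB]
  have hk0 : (0:ℝ) < k := by exact_mod_cast hk1
  have hn0 : (0:ℝ) < n := by exact_mod_cast hn1
  have hkn' : (k:ℝ) < n := by exact_mod_cast hkn
  nlinarith [mul_pos (mul_pos hn0 hk0) (sub_pos.mpr hkn')]

end Stmt9

theorem stmt_9 (n k : ℕ) (hn : 2 ≤ n) (hk1 : 1 ≤ k) (hk : k ≤ n - 1) :
    let L : Fin n → (Fin n → ℝ) → ℝ := fun j y => ∑ t : Fin n, (t.val : ℝ) * y (j + t)
    let ind : Finset (Fin n) → Fin n → ℝ := fun J t => if t ∈ J then 1 else 0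
    let h : {J : Finset (Fin n) // J.card = k} → {I : Finset (Fin n) // I.card = k} → ℝ :=
      fun J I => (1 / n) * ⨅ j : Fin n, L j fun t => ind I.1 t - ind J.1 t
    LinearIndependent ℝ h ∧ Submodule.span ℝ (Set.range h) = ⊤ := by
  intro L ind h
  haveI : NeZero n := ⟨by omega⟩
  have hkn : k < n := by omega
  have hn0 : (n : ℝ) ≠ 0 := by positivity
  have hL : ∀ (J I : {S : Finset (Fin n) // S.card = k}),
      h J I = (1 / (n : ℝ)) * ⨅ j : Fin n, Stmt9.cf I.1 J.1 j := by
    intro J I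
    have hinf : (⨅ j : Fin n, L j fun t => ind I.1 t - ind J.1 t)
        = ⨅ j : Fin n, Stmt9.cf I.1 J.1 j :=
      iInf_congr (fun j => Stmt9.L_eq j I.1 J.1)
    show (1 / (n : ℝ)) * (⨅ j : Fin n, L j fun t => ind I.1 t - ind J.1 t) = _
    rw [hinf]
  -- the all-ones vector is in the span
  set cB : ℝ := (1 / (n : ℝ)) * ((k : ℝ) * (∑ u : Fin n, (u.val : ℝ))
      - (n : ℝ) * (∑ s ∈ Finset.range k, ((n - k + s : ℕ) : ℝ))) with hcB_def
  have hcB : cB < 0 := by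
    rw [hcB_def]
    have h1 := Stmt9.constB_neg (n := n) hk1 hkn
    have h2 : (0:ℝ) < 1 / n := by positivity
    nlinarith
  have hBv : (∑ a : Fin n, h ⟨Stmt9.Iv a k, Stmt9.card_Iv a (le_of_lt hkn)⟩)
      = fun _ : {S : Finset (Fin n) // S.card = k} => cB := by
    funext I
    rw [Finset.sum_apply]
    have h1 : ∀ a : Fin n, h ⟨Stmt9.Iv a k, Stmt9.card_Iv a (le_of_lt hkn)⟩ I
        = (1 / (n : ℝ)) * ⨅ j : Fin n, Stmt9.cf I.1 (Stmt9.Iv a k) j := fun a => hL _ I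
    rw [Finset.sum_congr rfl (fun a _ => h1 a), ← Finset.mul_sum,
      Stmt9.identB I.2 hk1 hkn]
  have honemem : (fun _ : {S : Finset (Fin n) // S.card = k} => (1:ℝ))
      ∈ Submodule.span ℝ (Set.range h) := by
    have heq : (fun _ : {S : Finset (Fin n) // S.card = k} => (1:ℝ))
        = cB⁻¹ • (∑ a : Fin n, h ⟨Stmt9.Iv a k, Stmt9.card_Iv a (le_of_lt hkn)⟩) := by
      rw [hBv]
      funext I
      rw [Pi.smul_apply, smul_eq_mul]
      exact (inv_mul_cancel₀ (ne_of_lt hcB)).symm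
    rw [heq]
    exact Submodule.smul_mem _ _ (Submodule.sum_mem _
      (fun a _ => Submodule.subset_span ⟨_, rfl⟩))
  -- each coordinate vector is in the span
  have hsingle : ∀ Kx : {S : Finset (Fin n) // S.card = k},
      (fun I : {S : Finset (Fin n) // S.card = k} => if Kx = I then (1:ℝ) else 0)
        ∈ Submodule.span ℝ (Set.range h) := by
    intro Kx
    have hJcard : Kx.1.card = k := Kx.2
    have hJne : Kx.1.Nonempty := Finset.card_pos.mp (by omega)
    have hJuniv : Kx.1 ≠ Finset.univ := by
      intro hcontra
      have hcu := Finset.card_univ (α := Fin n)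
      rw [hcontra, hcu, Fintype.card_fin] at hJcard
      omega
    have hdn_card : ∀ S ∈ (Stmt9.Dset Kx.1).powerset, (Stmt9.dn S Kx.1).card = k := by
      intro S hS
      have h1 : S ⊆ Stmt9.Dset Kx.1 := Finset.mem_powerset.mp hS
      have h2 : S ⊆ Kx.1 := h1.trans (Finset.filter_subset _ _)
      have h3 : ∀ a ∈ S, a - 1 ∉ Kx.1 := fun a ha => (Finset.mem_filter.mp (h1 ha)).2
      rw [Stmt9.dn_card h2 h3, hJcard]
    classical
    set dnK : Finset (Fin n) → {S : Finset (Fin n) // S.card = k} := fun S =>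
      if hS : (Stmt9.dn S Kx.1).card = k then ⟨Stmt9.dn S Kx.1, hS⟩ else Kx with hdnK_def
    have hAv : (∑ S ∈ (Stmt9.Dset Kx.1).powerset, ((-1:ℝ)^S.card) • h (dnK S))
        = fun I : {S : Finset (Fin n) // S.card = k} => (if Kx.1 = I.1 then (1:ℝ) else 0)
            - (1 / (n : ℝ)) * (if (Stmt9.Dset Kx.1).card = 1 then (1:ℝ) else 0) := by
      funext I
      rw [Finset.sum_apply]
      have h1 : ∀ S ∈ (Stmt9.Dset Kx.1).powerset,
          (((-1:ℝ)^S.card) • h (dnK S)) I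
            = (1 / (n : ℝ)) * ((-1:ℝ)^S.card * ⨅ j : Fin n, Stmt9.cf I.1 (Stmt9.dn S Kx.1) j) := by
        intro S hS
        have hcard := hdn_card S hS
        have hdnKS : dnK S = ⟨Stmt9.dn S Kx.1, hcard⟩ := by
          rw [hdnK_def]
          simp [hcard]
        rw [Pi.smul_apply, smul_eq_mul, hdnKS, hL]
        ring
      rw [Finset.sum_congr rfl h1, ← Finset.mul_sum,
        Stmt9.identA (I.2.trans hJcard.symm) hJne hJuniv]
      field_simp
    have heq : (fun I : {S : Finset (Fin n) // S.card = k} => if Kx = I then (1:ℝ) else 0)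
        = (∑ S ∈ (Stmt9.Dset Kx.1).powerset, ((-1:ℝ)^S.card) • h (dnK S))
          + ((1 / (n : ℝ)) * (if (Stmt9.Dset Kx.1).card = 1 then (1:ℝ) else 0))
              • (fun _ : {S : Finset (Fin n) // S.card = k} => (1:ℝ)) := by
      rw [hAv]
      funext I
      rw [Pi.add_apply, Pi.smul_apply, smul_eq_mul]
      by_cases hKI : Kx = I
      · rw [if_pos hKI, if_pos (congrArg Subtype.val hKI)]
        ring
      · rw [if_neg hKI, if_neg (fun hh => hKI (Subtype.ext hh))]
        ring
    rw [heq]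
    exact Submodule.add_mem _
      (Submodule.sum_mem _ (fun S _ => Submodule.smul_mem _ _
        (Submodule.subset_span ⟨_, rfl⟩)))
      (Submodule.smul_mem _ _ honemem)
  have hspan : ⊤ ≤ Submodule.span ℝ (Set.range h) := by
    intro f _
    rw [pi_eq_sum_univ f]
    exact Submodule.sum_mem _ (fun i _ => Submodule.smul_mem _ _ (hsingle i))
  refine ⟨?_, le_antisymm le_top hspan⟩
  exact linearIndependent_of_top_le_span_of_card_eq_finrank hspan
    (Module.finrank_pi ℝ).symm
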